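/- arXiv:2201.04397 — 2 statements merged into one kernel-verified Lean document; each statement's English description precedes it below -/
import Mathlib

section
/- Main two-step projection theorem: for any δ ∈ ℝ^m and ρ > 0, the point obtained by first projecting δ orthogonally onto the zero-mean hyperplane A and then projecting the result onto the closed ball B of radius ρ is a closest point to δ in A ∩ B; i.e., Proj_{A∩B}(δ) = Proj_B(Proj_A(δ)). -/
open scoped RealInnerProductSpace

theorem two_step_projection_eq_exact_projection (m : ℕ) (hm : 1 ≤ m) (ρ : ℝ) (hρ : 0 < ρ)
    (δ n : EuclideanSpace ℝ (Fin m)) (hn : n = WithLp.toLp 2 (fun _ => (1 : ℝ)))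
    (δ' : EuclideanSpace ℝ (Fin m)) (hδ' : δ' = δ - (⟪n, δ⟫ / ‖n‖ ^ 2) • n)
    (δ'' : EuclideanSpace ℝ (Fin m)) (hδ'' : δ'' = min (ρ / ‖δ'‖) 1 • δ') :
    (⟪n, δ''⟫ = 0 ∧ ‖δ''‖ ≤ ρ) ∧
      (∀ z : EuclideanSpace ℝ (Fin m), ⟪n, z⟫ = 0 → ‖z‖ ≤ ρ → ‖δ - δ''‖ ≤ ‖δ - z‖) ∧
      (∀ z : EuclideanSpace ℝ (Fin m), ⟪n, z⟫ = 0 → ‖z‖ ≤ ρ →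
        (∀ w : EuclideanSpace ℝ (Fin m), ⟪n, w⟫ = 0 → ‖w‖ ≤ ρ → ‖δ - z‖ ≤ ‖δ - w‖) →
        z = δ'') := by
  -- n is nonzero
  have hn0 : n ≠ 0 := by
    rw [hn]
    intro h
    have h0 := congrArg (fun v : EuclideanSpace ℝ (Fin m) => v ⟨0, hm⟩) h
    simp at h0
  have hnn : ‖n‖ ^ 2 ≠ 0 := pow_ne_zero _ (norm_ne_zero_iff.mpr hn0)
  set c : ℝ := ⟪n, δ⟫ / ‖n‖ ^ 2 with hc
  set t : ℝ := min (ρ / ‖δ'‖) 1 with htdef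
  have ht0 : 0 ≤ t := le_min (div_nonneg hρ.le (norm_nonneg _)) zero_le_one
  have ht1 : t ≤ 1 := min_le_right _ _
  -- δ' is on the hyperplane
  have hδ'A : ⟪n, δ'⟫ = 0 := by
    rw [hδ', inner_sub_right, inner_smul_right, real_inner_self_eq_norm_sq, hc,
      div_mul_cancel₀ _ hnn, sub_self]
  have hδ''A : ⟪n, δ''⟫ = 0 := by
    rw [hδ'', inner_smul_right, hδ'A, mul_zero]
  -- δ'' in the ball
  have hδ''B : ‖δ''‖ ≤ ρ := by
    rw [hδ'', norm_smul, Real.norm_eq_abs, abs_of_nonneg ht0]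
    rcases eq_or_lt_of_le (norm_nonneg δ') with h0 | h0
    · rw [← h0, mul_zero]; exact hρ.le
    · calc t * ‖δ'‖ ≤ (ρ / ‖δ'‖) * ‖δ'‖ :=
            mul_le_mul_of_nonneg_right (min_le_left _ _) (norm_nonneg _)
        _ = ρ := div_mul_cancel₀ _ (ne_of_gt h0)
  -- key: δ'' is a closest point in the ball to δ'
  have hkey : ∀ z : EuclideanSpace ℝ (Fin m), ‖z‖ ≤ ρ → ‖δ' - δ''‖ ≤ ‖δ' - z‖ := by
    intro z hz
    rcases le_or_gt ‖δ'‖ ρ with h | h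
    · rcases eq_or_lt_of_le (norm_nonneg δ') with h0 | h0
      · have : δ' = 0 := by rw [← norm_eq_zero, ← h0]
        rw [hδ'', this]
        simp
      · have ht : t = 1 := min_eq_right ((le_div_iff₀ h0).mpr (by simpa using h))
        rw [hδ'', ht, one_smul, sub_self, norm_zero]
        exact norm_nonneg _
    · have h0 : (0:ℝ) < ‖δ'‖ := lt_trans hρ h
      have ht : t = ρ / ‖δ'‖ := min_eq_left ((div_le_one h0).mpr h.le)
      have : δ' - δ'' = (1 - ρ / ‖δ'‖) • δ' := by
        rw [hδ'', ht, sub_smul, one_smul]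
      rw [this, norm_smul, Real.norm_eq_abs,
        abs_of_nonneg (by rw [sub_nonneg]; exact (div_le_one h0).mpr h.le)]
      have htri : ‖δ'‖ ≤ ‖δ' - z‖ + ‖z‖ := by
        calc ‖δ'‖ = ‖(δ' - z) + z‖ := by rw [sub_add_cancel]
          _ ≤ ‖δ' - z‖ + ‖z‖ := norm_add_le _ _
      have : (1 - ρ / ‖δ'‖) * ‖δ'‖ = ‖δ'‖ - ρ := by
        field_simp
      rw [this]
      linarith
  -- Pythagoras
  have hpyth : ∀ w : EuclideanSpace ℝ (Fin m), ⟪n, w⟫ = 0 →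
      ‖δ - w‖ ^ 2 = ‖c • n‖ ^ 2 + ‖δ' - w‖ ^ 2 := by
    intro w hw
    have hdec : δ - w = c • n + (δ' - w) := by
      rw [hδ']; abel
    have horth : ⟪c • n, δ' - w⟫ = 0 := by
      rw [inner_smul_left, inner_sub_right, hδ'A, hw]
      simp
    rw [hdec, @norm_add_sq_real, horth]
    ring
  have hle : ∀ a b : ℝ, 0 ≤ b → a ^ 2 ≤ b ^ 2 → a ≤ b := by
    intro a b hb h
    nlinarith [sq_nonneg (a - b), sq_nonneg (a + b)]
  have hmain : ∀ z : EuclideanSpace ℝ (Fin m), ⟪n, z⟫ = 0 → ‖z‖ ≤ ρ →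
      ‖δ - δ''‖ ≤ ‖δ - z‖ := by
    intro z hzA hzB
    have h1 := hpyth δ'' hδ''A
    have h2 := hpyth z hzA
    have h3 : ‖δ' - δ''‖ ^ 2 ≤ ‖δ' - z‖ ^ 2 :=
      pow_le_pow_left₀ (norm_nonneg _) (hkey z hzB) 2
    have h4 : ‖δ - δ''‖ ^ 2 ≤ ‖δ - z‖ ^ 2 := by rw [h1, h2]; linarith
    exact hle _ _ (norm_nonneg _) h4
  refine ⟨⟨hδ''A, hδ''B⟩, hmain, ?_⟩
  -- uniqueness
  intro z hzA hzB hmin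
  have h1 : ‖δ - z‖ ≤ ‖δ - δ''‖ := hmin δ'' hδ''A hδ''B
  have h2 : ‖δ - δ''‖ ≤ ‖δ - z‖ := hmain z hzA hzB
  have heq : ‖δ - z‖ = ‖δ - δ''‖ := le_antisymm h1 h2
  -- midpoint
  set w : EuclideanSpace ℝ (Fin m) := (1/2 : ℝ) • (z + δ'') with hw
  have hwA : ⟪n, w⟫ = 0 := by
    rw [hw, inner_smul_right, inner_add_right, hzA, hδ''A]
    simp
  have hwB : ‖w‖ ≤ ρ := by
    rw [hw]
    calc ‖(1/2 : ℝ) • (z + δ'')‖ = (1/2) * ‖z + δ''‖ := by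
          rw [norm_smul, Real.norm_eq_abs]; norm_num
      _ ≤ (1/2) * (‖z‖ + ‖δ''‖) := by
          have := norm_add_le z δ''; linarith
      _ ≤ ρ := by linarith
  have h3 : ‖δ - z‖ ≤ ‖δ - w‖ := hmin w hwA hwB
  have hdw : δ - w = (1/2 : ℝ) • ((δ - z) + (δ - δ'')) := by
    rw [hw]
    module
  have hsub : z - δ'' = (δ - δ'') - (δ - z) := by abel
  have e1 : ‖δ - w‖ ^ 2 = (1/4) * ‖(δ - z) + (δ - δ'')‖ ^ 2 := by
    rw [hdw, norm_smul, Real.norm_eq_abs]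
    rw [mul_pow]
    norm_num
  have e2 : ‖(δ - z) + (δ - δ'')‖ ^ 2
      = ‖δ - z‖ ^ 2 + 2 * ⟪δ - z, δ - δ''⟫ + ‖δ - δ''‖ ^ 2 := by
    rw [@norm_add_sq_real]
  have e3 : ‖z - δ''‖ ^ 2
      = ‖δ - δ''‖ ^ 2 - 2 * ⟪δ - δ'', δ - z⟫ + ‖δ - z‖ ^ 2 := by
    rw [hsub, @norm_sub_sq_real]
  have hsym : ⟪δ - δ'', δ - z⟫ = ⟪δ - z, δ - δ''⟫ := real_inner_comm _ _
  have h4 : ‖δ - z‖ ^ 2 ≤ ‖δ - w‖ ^ 2 := pow_le_pow_left₀ (norm_nonneg _) h3 2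
  have h5 : ‖z - δ''‖ ^ 2 ≤ 0 := by
    rw [e3, hsym]
    rw [e1, e2] at h4
    rw [heq] at h4 ⊢
    linarith
  have h7 : ‖z - δ''‖ ^ 2 = 0 := le_antisymm h5 (sq_nonneg _)
  have h6 : ‖z - δ''‖ = 0 := pow_eq_zero_iff two_ne_zero |>.mp h7
  exact sub_eq_zero.mp (norm_eq_zero.mp h6)
end

section
/- Distance from δ to the feasible set in Case 1: if ‖P(δ)‖₂ > ρ > 0, then the minimum of ‖δ - z‖₂² over z with nᵀz = 0 and ‖z‖₂ ≤ ρ equals (nᵀδ)²/m + (‖P(δ)‖₂ - ρ)², attained at z* = (ρ/‖P(δ)‖₂)·P(δ). -/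
open scoped RealInnerProductSpace

theorem case1_distance_to_feasible_set (m : ℕ) (hm : 1 ≤ m) (ρ : ℝ) (hρ : 0 < ρ)
    (δ n : EuclideanSpace ℝ (Fin m)) (hn : n = WithLp.toLp 2 (fun _ => (1 : ℝ)))
    (Pδ : EuclideanSpace ℝ (Fin m)) (hP : Pδ = δ - (⟪n, δ⟫ / ‖n‖ ^ 2) • n)
    (hbig : ρ < ‖Pδ‖)
    (zstar : EuclideanSpace ℝ (Fin m)) (hz : zstar = (ρ / ‖Pδ‖) • Pδ) :
    (⟪n, zstar⟫ = 0 ∧ ‖zstar‖ ≤ ρ ∧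
        ‖δ - zstar‖ ^ 2 = ⟪n, δ⟫ ^ 2 / m + (‖Pδ‖ - ρ) ^ 2) ∧
      ∀ z : EuclideanSpace ℝ (Fin m), ⟪n, z⟫ = 0 → ‖z‖ ≤ ρ →
        ⟪n, δ⟫ ^ 2 / m + (‖Pδ‖ - ρ) ^ 2 ≤ ‖δ - z‖ ^ 2 := by
  have hm0 : (0:ℝ) < m := by exact_mod_cast hm
  have hPpos : 0 < ‖Pδ‖ := lt_trans hρ hbig
  have hnn : ⟪n, n⟫ = (m : ℝ) := by
    rw [hn, PiLp.inner_apply]; simp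
  have hnsq : ‖n‖ ^ 2 = (m : ℝ) := by
    rw [← real_inner_self_eq_norm_sq, hnn]
  have hPn : ⟪n, Pδ⟫ = 0 := by
    rw [hP, inner_sub_right, inner_smul_right, hnn, hnsq]
    field_simp
    ring
  -- key: for any z with ⟪n,z⟫ = 0, ‖δ - z‖² = ‖Pδ - z‖² + ⟪n,δ⟫²/m
  have key : ∀ z : EuclideanSpace ℝ (Fin m), ⟪n, z⟫ = 0 →
      ‖δ - z‖ ^ 2 = ‖Pδ - z‖ ^ 2 + ⟪n, δ⟫ ^ 2 / m := by
    intro z hzn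
    have hd : δ - z = (Pδ - z) + (⟪n, δ⟫ / ‖n‖ ^ 2) • n := by
      rw [hP]; abel
    have horth : ⟪Pδ - z, (⟪n, δ⟫ / ‖n‖ ^ 2) • n⟫ = 0 := by
      rw [inner_smul_right, inner_sub_left, real_inner_comm n Pδ,
        real_inner_comm n z]
      simp [hPn, hzn]
    have hnorm : ‖(⟪n, δ⟫ / ‖n‖ ^ 2) • n‖ ^ 2 = ⟪n, δ⟫ ^ 2 / m := by
      rw [norm_smul, Real.norm_eq_abs, mul_pow, sq_abs, div_pow, hnsq]
      field_simp
    rw [hd, norm_add_sq_real, horth, hnorm]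
    ring
  have hnz : ⟪n, zstar⟫ = 0 := by
    rw [hz, inner_smul_right, hPn]; ring
  have hzn : ‖zstar‖ = ρ := by
    rw [hz, norm_smul, Real.norm_eq_abs, abs_of_pos (div_pos hρ hPpos)]
    field_simp
  refine ⟨⟨hnz, le_of_eq hzn, ?_⟩, ?_⟩
  · rw [key zstar hnz]
    have : Pδ - zstar = (1 - ρ / ‖Pδ‖) • Pδ := by
      rw [hz, sub_smul, one_smul]
    rw [this, norm_smul, Real.norm_eq_abs,
      abs_of_pos (by rw [sub_pos]; exact (div_lt_one hPpos).2 hbig)]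
    have : (1 - ρ / ‖Pδ‖) * ‖Pδ‖ = ‖Pδ‖ - ρ := by field_simp
    rw [this]; ring
  · intro z hz1 hz2
    rw [key z hz1]
    have h1 : ‖Pδ‖ - ρ ≤ ‖Pδ - z‖ := by
      have := norm_sub_norm_le Pδ z
      linarith
    have h2 : 0 ≤ ‖Pδ‖ - ρ := by linarith
    nlinarith [norm_nonneg (Pδ - z)]
end
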